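/- Suppose (q,k) ≠ (2,2). Then for every m ∈ {0,…,k-1} and every m-dimensional subcode X of a q-ary simplex code of dimension k, there exist two distinct simplex codes C, C' with C ∩ C' = X. -/

import Mathlib

open Module Submodule

/-- A `q`-ary simplex code of dimension `k`: a `k`-dimensional subspace of `F^n`
whose coordinate functional restrictions are nonzero and pairwise non-proportional. -/
def IsSimplexCode {F : Type*} [Field F] {n : ℕ} (k : ℕ)
    (C : Submodule F (Fin n → F)) : Prop :=
  Module.finrank F ↥C = k ∧
  (∀ i : Fin n, ∃ c ∈ C, c i ≠ 0) ∧
  (∀ i j : Fin n, i ≠ j → ∀ a : F, ∃ c ∈ C, c j ≠ a * c i)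

section Aux

variable {F : Type*} [Field F] [Fintype F] {n q k : ℕ}

/-- the i-th coordinate functional restricted to C -/
def coordFn (C : Submodule F (Fin n → F)) (i : Fin n) : Module.Dual F ↥C :=
  (LinearMap.proj i).comp C.subtype

lemma coordFn_apply (C : Submodule F (Fin n → F)) (i : Fin n) (c : ↥C) :
    coordFn C i c = (c : Fin n → F) i := rfl

lemma coordFn_ne_zero {C : Submodule F (Fin n → F)} (hC : IsSimplexCode k C) (i : Fin n) :
    coordFn C i ≠ 0 := by
  obtain ⟨c, hc, hci⟩ := hC.2.1 i
  intro h
  have : coordFn C i ⟨c, hc⟩ = 0 := by rw [h]; rfl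
  exact hci this

lemma simplex_cover {C : Submodule F (Fin n → F)}
    (hC : IsSimplexCode k C) (hq : Fintype.card F = q) (hn : n * (q - 1) = q ^ k - 1)
    (f : Module.Dual F ↥C) (hf : f ≠ 0) :
    ∃ (i : Fin n) (a : F), a ≠ 0 ∧ f = a • coordFn C i := by
  classical
  haveI : FiniteDimensional F ↥C := inferInstance
  haveI : Fintype ↥C := Fintype.ofFinite _
  haveI : Finite (Module.Dual F ↥C) :=
    Finite.of_injective (fun g => (g : ↥C → F)) DFunLike.coe_injective
  haveI : Fintype (Module.Dual F ↥C) := Fintype.ofFinite _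
  set Ψ : Fin n × Fˣ → {g : Module.Dual F ↥C // g ≠ 0} := fun p =>
    ⟨(p.2 : F) • coordFn C p.1, by
      simp only [ne_eq, smul_eq_zero, Units.ne_zero, false_or]
      exact coordFn_ne_zero hC p.1⟩ with hΨ
  have hinj : Function.Injective Ψ := by
    rintro ⟨i, a⟩ ⟨j, b⟩ h
    simp only [hΨ, Subtype.mk_eq_mk] at h
    by_cases hij : i = j
    · subst hij
      have hab : (a : F) = (b : F) := by
        obtain ⟨c, hc, hci⟩ := hC.2.1 i
        have := congrArg (fun g => g ⟨c, hc⟩) h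
        simp only [LinearMap.smul_apply, smul_eq_mul, coordFn_apply] at this
        exact mul_right_cancel₀ hci this
      simp [Prod.ext_iff, Units.ext_iff, hab]
    · exfalso
      obtain ⟨c, hc, hne⟩ := hC.2.2 i j hij ((b : F)⁻¹ * (a : F))
      have := congrArg (fun g => g ⟨c, hc⟩) h
      simp only [LinearMap.smul_apply, smul_eq_mul, coordFn_apply] at this
      apply hne
      rw [mul_assoc, this, ← mul_assoc, inv_mul_cancel₀ b.ne_zero, one_mul]
  have hcards : Fintype.card (Fin n × Fˣ) = Fintype.card {g : Module.Dual F ↥C // g ≠ 0} := by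
    have hdual : Fintype.card (Module.Dual F ↥C) = q ^ k := by
      rw [card_eq_pow_finrank (K := F), Subspace.dual_finrank_eq, hC.1, hq]
    have : Fintype.card {g : Module.Dual F ↥C // g ≠ 0} = q ^ k - 1 := by
      rw [Fintype.card_subtype_compl, Fintype.card_subtype_eq, hdual]
    rw [this, Fintype.card_prod, Fintype.card_fin, Fintype.card_units, hq, hn]
  have hbij : Function.Bijective Ψ :=
    (Fintype.bijective_iff_injective_and_card Ψ).mpr ⟨hinj, hcards⟩
  obtain ⟨⟨i, a⟩, hia⟩ := hbij.2 ⟨f, hf⟩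
  exact ⟨i, a, a.ne_zero, (congrArg Subtype.val hia).symm⟩

lemma master {C₀ : Submodule F (Fin n → F)} (hC : IsSimplexCode k C₀)
    (hq : Fintype.card F = q) (hn : n * (q - 1) = q ^ k - 1)
    (X : Submodule F (Fin n → F)) (hXC : X ≤ C₀)
    (σ : Module.Dual F ↥C₀ → Module.Dual F ↥C₀)
    (hbij : Function.Bijective σ)
    (heq : ∀ (a : F) f, σ (a • f) = a • σ f)
    (hXfix : ∀ f (x : ↥C₀), (x : Fin n → F) ∈ X → σ f x = f x)
    (hkey : ∀ u v : ↥C₀, (∀ f, f u = σ f v) → (u : Fin n → F) ∈ X) :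
    ∃ C' : Submodule F (Fin n → F),
      IsSimplexCode k C' ∧ X ≤ C' ∧ C₀ ⊓ C' = X := by
  classical
  have hσ0 : σ 0 = 0 := by
    have := heq 0 0
    simpa using this
  have hσne : ∀ f : Module.Dual F ↥C₀, f ≠ 0 → σ f ≠ 0 := by
    intro f hf h0
    exact hf (hbij.1 (h0.trans hσ0.symm))
  set Φ : ↥C₀ →ₗ[F] (Fin n → F) := LinearMap.pi (fun i => σ (coordFn C₀ i)) with hΦ
  have hΦapp : ∀ (v : ↥C₀) (i : Fin n), Φ v i = σ (coordFn C₀ i) v := fun v i => rfl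
  have cover := simplex_cover hC hq hn
  have hsep : ∀ v : ↥C₀, (∀ i : Fin n, σ (coordFn C₀ i) v = 0) → v = 0 := by
    intro v hv
    apply (Module.forall_dual_apply_eq_zero_iff F v).mp
    intro φ
    by_cases hφ : φ = 0
    · simp [hφ]
    · obtain ⟨g, rfl⟩ := hbij.2 φ
      have hg : g ≠ 0 := by
        intro h; apply hφ; rw [h, hσ0]
      obtain ⟨i, a, ha, rfl⟩ := cover g hg
      rw [heq]
      simp [hv i]
  have hΦinj : Function.Injective Φ := by
    rw [← LinearMap.ker_eq_bot]
    rw [eq_bot_iff]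
    intro v hv
    have : Φ v = 0 := hv
    exact hsep v (fun i => by rw [← hΦapp]; exact congrFun this i)
  refine ⟨LinearMap.range Φ, ⟨?_, ?_, ?_⟩, ?_, ?_⟩
  · rw [LinearMap.finrank_range_of_inj hΦinj, hC.1]
  · intro i
    have h1 : σ (coordFn C₀ i) ≠ 0 := hσne _ (coordFn_ne_zero hC i)
    have h2 : ∃ v : ↥C₀, σ (coordFn C₀ i) v ≠ 0 := by
      by_contra h
      push_neg at h
      exact h1 (LinearMap.ext fun v => h v)
    obtain ⟨v, hv⟩ := h2
    exact ⟨Φ v, LinearMap.mem_range_self Φ v, hv⟩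
  · intro i j hij a
    by_contra h
    push_neg at h
    have hall : ∀ v : ↥C₀, σ (coordFn C₀ j) v = a * σ (coordFn C₀ i) v := by
      intro v
      have := h (Φ v) (LinearMap.mem_range_self Φ v)
      rwa [hΦapp, hΦapp] at this
    have : σ (coordFn C₀ j) = σ (a • coordFn C₀ i) := by
      rw [heq]
      exact LinearMap.ext fun v => hall v
    have hji := hbij.1 this
    obtain ⟨c, hc, hne⟩ := hC.2.2 i j hij a
    apply hne
    have := congrArg (fun g => g ⟨c, hc⟩) hji
    simpa [coordFn_apply] using this
  · intro x hx
    have hxC : x ∈ C₀ := hXC hx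
    refine ⟨⟨x, hxC⟩, funext fun i => ?_⟩
    rw [hΦapp, hXfix _ ⟨x, hxC⟩ hx, coordFn_apply]
  · apply le_antisymm
    · rintro c ⟨hc₀, hc'⟩
      obtain ⟨v, hv⟩ := hc'
      have key : ∀ f : Module.Dual F ↥C₀, f ⟨c, hc₀⟩ = σ f v := by
        intro f
        by_cases hf : f = 0
        · subst hf; rw [hσ0]; simp
        · obtain ⟨i, a, ha, rfl⟩ := cover f hf
          rw [heq]
          have hci : (c : Fin n → F) i = σ (coordFn C₀ i) v := by
            rw [← hΦapp, hv]
          simp [coordFn_apply, hci]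
      exact hkey ⟨c, hc₀⟩ v key
    · intro x hx
      refine ⟨hXC hx, ?_⟩
      have hxC : x ∈ C₀ := hXC hx
      exact ⟨⟨x, hxC⟩, funext fun i => by rw [hΦapp, hXfix _ ⟨x, hxC⟩ hx, coordFn_apply]⟩

lemma exists_not_mem_of_ne_top {V : Type*} [AddCommGroup V] [Module F V]
    (A : Submodule F V) (hA : A ≠ ⊤) : ∃ f, f ∉ A := by
  by_contra h
  push_neg at h
  exact hA (Submodule.eq_top_iff'.mpr h)

lemma eq_of_agree_outside {V : Type*} [AddCommGroup V] [Module F V] [FiniteDimensional F V]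
    (A : Submodule F (Module.Dual F V)) (hA : A ≠ ⊤) (u v : V)
    (h : ∀ f ∉ A, f u = f v) : u = v := by
  obtain ⟨ψ, hψ⟩ := exists_not_mem_of_ne_top A hA
  have hall : ∀ f : Module.Dual F V, f u = f v := by
    intro f
    by_cases hf : f ∈ A
    · have h1 : f + ψ ∉ A := by
        intro hmem
        exact hψ (by simpa using A.sub_mem hmem hf)
      have e1 := h _ h1
      have e2 := h _ hψ
      simp only [LinearMap.add_apply] at e1
      have e3 : f u + ψ u = f v + ψ u := by rw [e1, e2]
      exact add_right_cancel e3
    · exact h f hf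
  rw [← sub_eq_zero]
  apply (Module.forall_dual_apply_eq_zero_iff F (u - v)).mp
  intro φ
  rw [map_sub, hall φ, sub_self]

lemma two_cases (h2 : Fintype.card F = 2) : ∀ a : F, a = 0 ∨ a = 1 := by
  classical
  intro a
  by_contra h
  push_neg at h
  have : ({0, 1, a} : Finset F).card ≤ Fintype.card F := Finset.card_le_univ _
  rw [h2] at this
  have h01 : (0 : F) ≠ 1 := zero_ne_one
  rw [Finset.card_insert_of_notMem (by simp [h01, Ne.symm h.1]),
    Finset.card_insert_of_notMem (by simp [Ne.symm h.2]), Finset.card_singleton] at this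
  omega

lemma eq_zero_of_basis_eval {V : Type*} [AddCommGroup V] [Module F V] [FiniteDimensional F V]
    {ι : Type*} [Fintype ι] (g : Basis ι F (Module.Dual F V)) (u : V)
    (h : ∀ i, g i u = 0) : u = 0 := by
  apply (Module.forall_dual_apply_eq_zero_iff F u).mp
  intro φ
  have hrepr := g.sum_repr φ
  calc φ u = (∑ i, g.repr φ i • g i) u := by rw [hrepr]
  _ = ∑ i, g.repr φ i * g i u := by
      rw [LinearMap.sum_apply]
      simp [LinearMap.smul_apply]
  _ = 0 := Finset.sum_eq_zero fun i _ => by rw [h i, mul_zero]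

lemma mem_ann_eval_zero {V : Type*} [AddCommGroup V] [Module F V]
    (A : Submodule F (Module.Dual F V)) {ι : Type*} [Fintype ι] (g : Basis ι F ↥A)
    (u : V) (h : ∀ i, ((g i : ↥A) : Module.Dual F V) u = 0) :
    ∀ f ∈ A, f u = 0 := by
  intro f hf
  have hrepr := g.sum_repr ⟨f, hf⟩
  have := congrArg (fun z : ↥A => ((z : Module.Dual F V)) u) hrepr
  simp only at this
  rw [← this, AddSubmonoidClass.coe_finset_sum, LinearMap.sum_apply]
  refine Finset.sum_eq_zero fun i _ => ?_
  rw [SetLike.val_smul, LinearMap.smul_apply, h i, smul_zero]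


end Aux

set_option maxHeartbeats 1000000 in
set_option synthInstance.maxHeartbeats 200000 in
theorem exists_two_simplex_codes_meeting_in_subcode {F : Type*} [Field F] [Fintype F]
    {q n k m : ℕ} (hq : Fintype.card F = q) (hk : 2 ≤ k)
    (hn : n * (q - 1) = q ^ k - 1) (hqk : ¬(q = 2 ∧ k = 2)) (hmk : m ≤ k - 1)
    (X : Submodule F (Fin n → F)) (hm : Module.finrank F ↥X = m)
    (hsub : ∃ C₀ : Submodule F (Fin n → F), IsSimplexCode k C₀ ∧ X ≤ C₀) :
    ∃ C C' : Submodule F (Fin n → F),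
      IsSimplexCode k C ∧ IsSimplexCode k C' ∧ C ≠ C' ∧ C ⊓ C' = X := by
  classical
  obtain ⟨C₀, hC₀, hXC⟩ := hsub
  have hq2 : 2 ≤ q := by rw [← hq]; exact Fintype.one_lt_card
  have hmklt : m < k := by omega
  haveI : FiniteDimensional F (Module.Dual F ↥C₀) := inferInstance
  set X' : Submodule F ↥C₀ := X.comap C₀.subtype with hX'def
  have hmemX' : ∀ u : ↥C₀, u ∈ X' ↔ (u : Fin n → F) ∈ X := by
    intro u; rw [hX'def, Submodule.mem_comap]; rfl
  have hmX' : Module.finrank F ↥X' = m := by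
    rw [← hm]
    have hmap : X'.map C₀.subtype = X := by
      rw [hX'def, Submodule.map_comap_subtype]
      exact inf_of_le_right hXC
    rw [← hmap]
    exact (Submodule.equivMapOfInjective _ (Submodule.injective_subtype C₀) X').finrank_eq
  set A : Submodule F (Module.Dual F ↥C₀) := X'.dualAnnihilator with hAdef
  have hmemX : ∀ u : ↥C₀, (∀ f ∈ A, f u = 0) → (u : Fin n → F) ∈ X := by
    intro u hu
    rw [← hmemX' u]
    exact (Subspace.forall_mem_dualAnnihilator_apply_eq_zero_iff X' u).mp hu
  have hfix0 : ∀ f ∈ A, ∀ x : ↥C₀, (x : Fin n → F) ∈ X → f x = 0 := by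
    intro f hf x hx
    exact (Submodule.mem_dualAnnihilator f).mp hf x ((hmemX' x).mpr hx)
  have hdim : Module.finrank F (Module.Dual F ↥C₀) = k := by
    rw [Subspace.dual_finrank_eq, hC₀.1]
  have hArank : Module.finrank F ↥A + m = k := by
    have h1 := Subspace.finrank_add_finrank_dualCoannihilator_eq A
    rw [hAdef, Subspace.dualAnnihilator_dualCoannihilator_eq, hmX', hC₀.1] at h1
    exact h1
  -- it suffices to construct a suitable σ
  suffices hσ : ∃ σ : Module.Dual F ↥C₀ → Module.Dual F ↥C₀,
      Function.Bijective σ ∧ (∀ (a : F) f, σ (a • f) = a • σ f) ∧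
      (∀ f (x : ↥C₀), (x : Fin n → F) ∈ X → σ f x = f x) ∧
      (∀ u v : ↥C₀, (∀ f, f u = σ f v) → (u : Fin n → F) ∈ X) by
    obtain ⟨σ, hbij, heq, hXfix, hkey⟩ := hσ
    obtain ⟨C', hC', hXC', hint⟩ := master hC₀ hq hn X hXC σ hbij heq hXfix hkey
    refine ⟨C₀, C', hC₀, hC', ?_, hint⟩
    intro hEq
    rw [hEq, inf_idem] at hint
    rw [← hint] at hm
    rw [hC'.1] at hm
    omega
  by_cases hm0 : m = 0
  · -- X = ⊥
    have hXbot : X = ⊥ := by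
      rw [← Submodule.finrank_eq_zero (R := F) (M := Fin n → F)]
      omega
    by_cases hq2' : q = 2
    · -- Case IV : q = 2, m = 0
      have hcard2 : Fintype.card F = 2 := by rw [hq]; exact hq2'
      have htwo := two_cases hcard2
      have h11 : (1 : F) + 1 = 0 := by
        rcases htwo (1 + 1) with h | h
        · exact h
        · exact absurd (by linear_combination h) (one_ne_zero (α := F))
      have hk3 : 3 ≤ k := by
        rcases Nat.lt_or_ge k 3 with hlt | hge
        · exact absurd ⟨hq2', by omega⟩ hqk
        · exact hge
      obtain ⟨g⟩ : Nonempty (Basis (Fin k) F (Module.Dual F ↥C₀)) :=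
        ⟨(Module.finBasis F (Module.Dual F ↥C₀)).reindex (finCongr hdim)⟩
      obtain ⟨nxt, hnxt_lt, hnxt_ge⟩ : ∃ nxt : Fin k → Fin k,
          (∀ i : Fin k, (i : ℕ) + 1 < k → (nxt i : ℕ) = (i : ℕ) + 1) ∧
          (∀ i : Fin k, ¬((i : ℕ) + 1 < k) → (nxt i : ℕ) = 0) := by
        refine ⟨fun i => if h : (i : ℕ) + 1 < k then ⟨(i : ℕ) + 1, h⟩ else ⟨0, by omega⟩,
          fun i h => ?_, fun i h => ?_⟩
        · simp [h]
        · simp [h]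
      have hnxtv : ∀ i : Fin k, ((nxt i : ℕ) = (i : ℕ) + 1 ∧ (i : ℕ) + 1 < k) ∨
          ((nxt i : ℕ) = 0 ∧ (i : ℕ) + 1 = k) := by
        intro i
        by_cases h : (i : ℕ) + 1 < k
        · exact Or.inl ⟨hnxt_lt i h, h⟩
        · exact Or.inr ⟨hnxt_ge i h, by have := i.2; omega⟩
      have hnxt_ne : ∀ i, nxt i ≠ i := by
        intro i hcon
        have hv := congrArg Fin.val hcon
        rcases hnxtv i with ⟨h1, h2⟩ | ⟨h1, h2⟩ <;> omega
      have hnxt_inj : Function.Injective nxt := by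
        intro i j hcon
        have hv := congrArg Fin.val hcon
        have hik := i.2
        have hjk := j.2
        apply Fin.ext
        rcases hnxtv i with ⟨h1, h2⟩ | ⟨h1, h2⟩ <;> rcases hnxtv j with ⟨h3, h4⟩ | ⟨h3, h4⟩ <;>
          omega
      have hnxt2 : ∀ i, nxt (nxt i) ≠ i := by
        intro i hcon
        have hv := congrArg Fin.val hcon
        have hik := i.2
        rcases hnxtv i with ⟨h1, h2⟩ | ⟨h1, h2⟩ <;> rcases hnxtv (nxt i) with ⟨h3, h4⟩ | ⟨h3, h4⟩ <;>
          omega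
      have hab : ∀ i j, g (nxt i) ≠ g (nxt j) + g j := by
        intro i j hcon
        have e1 := congrArg (fun z => g.repr z j) hcon
        simp only [map_add, Basis.repr_self, Finsupp.add_apply, Finsupp.single_eq_same,
          Finsupp.single_eq_of_ne' (hnxt_ne j), zero_add] at e1
        have hij : nxt i = j := by
          by_contra hne
          rw [Finsupp.single_eq_of_ne' hne] at e1
          exact zero_ne_one e1
        have e2 := congrArg (fun z => g.repr z (nxt j)) hcon
        simp only [map_add, Basis.repr_self, Finsupp.add_apply, Finsupp.single_eq_same,
          Finsupp.single_eq_of_ne' (Ne.symm (hnxt_ne j)), add_zero] at e2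
        have hij2 : nxt i = nxt j := by
          by_contra hne
          rw [Finsupp.single_eq_of_ne' hne] at e2
          exact zero_ne_one e2
        exact hnxt_ne j (hij2.symm.trans hij)
      have hbinj : ∀ i j, g (nxt i) + g i = g (nxt j) + g j → i = j := by
        intro i j hcon
        by_contra hne
        have e1 := congrArg (fun z => g.repr z i) hcon
        simp only [map_add, Basis.repr_self, Finsupp.add_apply, Finsupp.single_eq_same,
          Finsupp.single_eq_of_ne' (hnxt_ne i), zero_add,
          Finsupp.single_eq_of_ne' (fun hh : j = i => hne hh.symm), add_zero] at e1
        have hji : nxt j = i := by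
          by_contra hne2
          rw [Finsupp.single_eq_of_ne' hne2] at e1
          exact one_ne_zero e1
        have e2 := congrArg (fun z => g.repr z j) hcon
        simp only [map_add, Basis.repr_self, Finsupp.add_apply, Finsupp.single_eq_same,
          Finsupp.single_eq_of_ne' (hnxt_ne j), zero_add,
          Finsupp.single_eq_of_ne' hne, add_zero] at e2
        have hij : nxt i = j := by
          by_contra hne2
          rw [Finsupp.single_eq_of_ne' hne2] at e2
          exact zero_ne_one e2
        apply hnxt2 i
        rw [hij, hji]
      have hainj : ∀ i j, g (nxt i) = g (nxt j) → i = j :=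
        fun i j hcon => hnxt_inj (g.injective hcon)
      have ha0 : ∀ i, g (nxt i) ≠ 0 := fun i => Basis.ne_zero g (nxt i)
      have hb0 : ∀ i, g (nxt i) + g i ≠ 0 := by
        intro i hcon
        have e1 := congrArg (fun z => g.repr z i) hcon
        simp only [map_add, map_zero, Basis.repr_self, Finsupp.add_apply,
          Finsupp.single_eq_same, Finsupp.single_eq_of_ne' (hnxt_ne i), zero_add,
          Finsupp.zero_apply] at e1
        exact one_ne_zero e1
      set σf : Module.Dual F ↥C₀ → Module.Dual F ↥C₀ := fun f =>
        if h : ∃ i, f = g (nxt i) then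
          g (nxt (Classical.choose h)) + g (Classical.choose h)
        else if h2 : ∃ i, f = g (nxt i) + g i then g (nxt (Classical.choose h2))
        else f with hσdef
      have hσa : ∀ i, σf (g (nxt i)) = g (nxt i) + g i := by
        intro i
        have hex : ∃ j, g (nxt i) = g (nxt j) := ⟨i, rfl⟩
        have hch : Classical.choose hex = i :=
          (hainj _ _ (Classical.choose_spec hex)).symm
        simp only [hσdef]
        rw [dif_pos hex, hch]
      have hσb : ∀ i, σf (g (nxt i) + g i) = g (nxt i) := by
        intro i
        have hnex : ¬∃ j, g (nxt i) + g i = g (nxt j) := by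
          rintro ⟨j, hj⟩
          exact hab j i hj.symm
        have hex : ∃ j, g (nxt i) + g i = g (nxt j) + g j := ⟨i, rfl⟩
        have hch : Classical.choose hex = i :=
          (hbinj _ _ (Classical.choose_spec hex)).symm
        simp only [hσdef]
        rw [dif_neg hnex, dif_pos hex, hch]
      have hσelse : ∀ f, (∀ i, f ≠ g (nxt i)) → (∀ i, f ≠ g (nxt i) + g i) → σf f = f := by
        intro f h1 h2
        simp only [hσdef]
        rw [dif_neg (by rintro ⟨i, hi⟩; exact h1 i hi), dif_neg (by rintro ⟨i, hi⟩; exact h2 i hi)]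
      have hinv : ∀ f, σf (σf f) = f := by
        intro f
        by_cases h1 : ∃ i, f = g (nxt i)
        · obtain ⟨i, rfl⟩ := h1
          rw [hσa, hσb]
        · by_cases h2 : ∃ i, f = g (nxt i) + g i
          · obtain ⟨i, rfl⟩ := h2
            rw [hσb, hσa]
          · push_neg at h1 h2
            rw [hσelse f h1 h2, hσelse f h1 h2]
      refine ⟨σf, Function.bijective_iff_has_inverse.mpr ⟨σf, hinv, hinv⟩, ?_, ?_, ?_⟩
      · intro a f
        rcases htwo a with ha | ha
        · subst ha
          rw [zero_smul, zero_smul]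
          exact hσelse 0 (fun i => Ne.symm (ha0 i)) (fun i => Ne.symm (hb0 i))
        · subst ha
          rw [one_smul, one_smul]
      · intro f x hx
        rw [hXbot, Submodule.mem_bot] at hx
        have hx0 : x = 0 := Subtype.ext hx
        subst hx0
        rw [map_zero, map_zero]
      · intro u v h
        rw [hXbot, Submodule.mem_bot]
        have hA : ∀ i, g (nxt i) u = g (nxt i) v + g i v := by
          intro i
          have hh := h (g (nxt i))
          rw [hσa, LinearMap.add_apply] at hh
          exact hh
        have hB : ∀ i, g (nxt i) u + g i u = g (nxt i) v := by
          intro i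
          have hh := h (g (nxt i) + g i)
          rw [hσb, LinearMap.add_apply] at hh
          exact hh
        have hgw : ∀ i : Fin k, g i (u - v) = 0 := by
          intro i
          rw [map_sub]
          have e1 := hA i
          have e2 := hB i
          linear_combination e2 - e1 - (g i) v * h11
        have huv : u = v := by
          have := eq_zero_of_basis_eval g (u - v) hgw
          rwa [sub_eq_zero] at this
        subst huv
        have hgu : ∀ i : Fin k, g i u = 0 := by
          intro i
          have e2 := hB i
          exact add_eq_right.mp ((add_comm (g (nxt i) u) (g i u)) ▸ e2)
        have hu0 : u = 0 := eq_zero_of_basis_eval g u hgu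
        rw [hu0]
        rfl
    · -- Case V : q ≥ 3, m = 0
      have hq3 : 3 ≤ q := by omega
      obtain ⟨μ, hμc⟩ := Finset.card_pos.mp (show 0 < (({0, 1} : Finset F)ᶜ).card by
        rw [Finset.card_compl]
        have h01 : ({0, 1} : Finset F).card ≤ 2 :=
          (Finset.card_insert_le _ _).trans (by simp)
        rw [hq]
        omega)
      rw [Finset.mem_compl, Finset.mem_insert, Finset.mem_singleton] at hμc
      push_neg at hμc
      obtain ⟨hμ0, hμ1⟩ := hμc
      have h1μ : (1 : F) - μ ≠ 0 := sub_ne_zero.mpr (Ne.symm hμ1)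
      obtain ⟨g⟩ : Nonempty (Basis (Fin k) F (Module.Dual F ↥C₀)) :=
        ⟨(Module.finBasis F (Module.Dual F ↥C₀)).reindex (finCongr hdim)⟩
      obtain ⟨i0, hi0⟩ : ∃ i : Fin k, (i : ℕ) = 0 := ⟨⟨0, by omega⟩, rfl⟩
      obtain ⟨i1, hi1⟩ : ∃ i : Fin k, (i : ℕ) = 1 := ⟨⟨1, by omega⟩, rfl⟩
      set S : Module.Dual F ↥C₀ → Prop :=
        fun f => ∃ (i : Fin k) (c : F), f = c • g i with hSdef
      have hS0 : S 0 := ⟨i0, 0, by rw [zero_smul]⟩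
      have hSsmul : ∀ (c : F), c ≠ 0 → ∀ f, (S (c • f) ↔ S f) := by
        intro c hc f
        constructor
        · rintro ⟨i, c', hcc⟩
          refine ⟨i, c⁻¹ * c', ?_⟩
          rw [mul_smul, ← hcc, smul_smul, inv_mul_cancel₀ hc, one_smul]
        · rintro ⟨i, c', rfl⟩
          exact ⟨i, c * c', by rw [smul_smul]⟩
      have hnotS : ∀ i j, i ≠ j → ∀ c : F, c ≠ 0 → ¬ S (g i + c • g j) := by
        rintro i j hij c hc ⟨l, c', hgl⟩
        have e := congrArg (fun z => g.repr z i) hgl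
        simp only [map_add, map_smul, Basis.repr_self, Finsupp.add_apply, Finsupp.smul_apply,
          smul_eq_mul, Finsupp.single_eq_same,
          Finsupp.single_eq_of_ne' (fun hh : j = i => hij hh.symm), mul_zero, add_zero] at e
        by_cases hl : l = i
        · subst hl
          rw [Finsupp.single_eq_same, mul_one] at e
          have e2 := congrArg (fun z => g.repr z j) hgl
          simp only [map_add, map_smul, Basis.repr_self, Finsupp.add_apply, Finsupp.smul_apply,
            smul_eq_mul, Finsupp.single_eq_same, Finsupp.single_eq_of_ne' hij, mul_zero,
            mul_one, zero_add] at e2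
          exact hc e2
        · rw [Finsupp.single_eq_of_ne' hl, mul_zero] at e
          exact one_ne_zero e
      refine ⟨fun f => if S f then μ • f else f, ?_, ?_, ?_, ?_⟩
      · refine Function.bijective_iff_has_inverse.mpr
          ⟨fun f => if S f then μ⁻¹ • f else f, ?_, ?_⟩
        · intro f
          beta_reduce
          by_cases hf : S f
          · rw [if_pos hf, if_pos ((hSsmul μ hμ0 f).mpr hf), smul_smul,
              inv_mul_cancel₀ hμ0, one_smul]
          · rw [if_neg hf, if_neg hf]
        · intro f
          beta_reduce
          by_cases hf : S f
          · rw [if_pos hf, if_pos ((hSsmul μ⁻¹ (inv_ne_zero hμ0) f).mpr hf), smul_smul,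
              mul_inv_cancel₀ hμ0, one_smul]
          · rw [if_neg hf, if_neg hf]
      · intro a f
        beta_reduce
        by_cases ha : a = 0
        · subst ha
          rw [zero_smul, if_pos hS0, smul_zero, zero_smul]
        · by_cases hf : S f
          · rw [if_pos ((hSsmul a ha f).mpr hf), if_pos hf, smul_comm]
          · rw [if_neg (fun hmem => hf ((hSsmul a ha f).mp hmem)), if_neg hf]
      · intro f x hx
        rw [hXbot, Submodule.mem_bot] at hx
        have hx0 : x = 0 := Subtype.ext hx
        subst hx0
        beta_reduce
        by_cases hf : S f
        · rw [if_pos hf]; simp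
        · rw [if_neg hf]
      · intro u v h
        rw [hXbot, Submodule.mem_bot]
        suffices hu : u = 0 by rw [hu]; rfl
        have hgi : ∀ i, g i u = μ * g i v := by
          intro i
          have hh := h (g i)
          beta_reduce at hh
          rw [if_pos ⟨i, 1, (one_smul F (g i)).symm⟩] at hh
          simpa using hh
        have hguv : ∀ j, g j u = g j v := by
          intro j
          set i : Fin k := if j = i0 then i1 else i0 with hidef
          have hij : i ≠ j := by
            rw [hidef]
            by_cases hj : j = i0
            · rw [if_pos hj, hj]
              intro hcon
              have := congrArg Fin.val hcon
              rw [hi0, hi1] at this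
              omega
            · rw [if_neg hj]
              exact fun hcon => hj hcon.symm
          have e1 : (g i + g j) u = (g i + g j) v := by
            have hh := h (g i + g j)
            beta_reduce at hh
            rwa [if_neg (by
              have := hnotS i j hij 1 one_ne_zero
              rwa [one_smul] at this)] at hh
          have e2 : (g i + μ • g j) u = (g i + μ • g j) v := by
            have hh := h (g i + μ • g j)
            beta_reduce at hh
            rwa [if_neg (hnotS i j hij μ hμ0)] at hh
          simp only [LinearMap.add_apply, LinearMap.smul_apply, smul_eq_mul] at e1 e2
          have hmc : (1 - μ) * (g j u) = (1 - μ) * (g j v) := by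
            linear_combination e1 - e2
          exact mul_left_cancel₀ h1μ hmc
        have hgv0 : ∀ j, g j u = 0 := by
          intro j
          have h1 := hgi j
          have h2 := hguv j
          have hz : (1 - μ) * (g j v) = 0 := by linear_combination h1 - h2
          rcases mul_eq_zero.mp hz with h3 | h3
          · exact absurd h3 h1μ
          · rw [h2, h3]
        exact eq_zero_of_basis_eval g u hgv0
  · -- m ≥ 1
    have hXne : X ≠ ⊥ := by
      intro h
      rw [h, finrank_bot] at hm
      omega
    obtain ⟨x₀, hx₀X, hx₀⟩ := Submodule.exists_mem_ne_zero_of_ne_bot hXne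
    have hAne : A ≠ ⊤ := by
      intro hA
      have hu₀ : (⟨x₀, hXC hx₀X⟩ : ↥C₀) ≠ 0 := by
        intro h
        exact hx₀ (congrArg Subtype.val h)
      have := (Module.forall_dual_apply_eq_zero_iff F (⟨x₀, hXC hx₀X⟩ : ↥C₀)).mp
        (fun φ => hfix0 φ (by rw [hA]; trivial) _ hx₀X)
      exact hu₀ this
    by_cases hq2' : q = 2
    · by_cases hd1 : Module.finrank F ↥A = 1
      · -- Case III : q = 2, dim A = 1
        have hcard2 : Fintype.card F = 2 := by rw [hq]; exact hq2'
        have htwo := two_cases hcard2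
        have h11 : (1 : F) + 1 = 0 := by
          rcases htwo (1 + 1) with h | h
          · exact h
          · exact absurd (by linear_combination h) (one_ne_zero (α := F))
        have hk3 : 3 ≤ k := by
          rcases Nat.lt_or_ge k 3 with hlt | hge
          · exfalso; exact hqk ⟨hq2', by omega⟩
          · exact hge
        haveI : Module.Free F ↥A := Module.Free.of_divisionRing F ↥A
        obtain ⟨gb⟩ : Nonempty (Basis (Fin 1) F ↥A) :=
          ⟨(Module.finBasis F ↥A).reindex (finCongr hd1)⟩
        have hg0A : ((gb 0 : ↥A) : Module.Dual F ↥C₀) ∈ A := (gb 0).2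
        set g0 : Module.Dual F ↥C₀ := ((gb 0 : ↥A) : Module.Dual F ↥C₀) with hg0def
        have hg0ne : g0 ≠ 0 := by
          intro hcon
          exact Basis.ne_zero gb 0 (Subtype.ext hcon)
        have hAspan : ∀ f ∈ A, ∃ c : F, f = c • g0 := by
          intro f hf
          have hsr := gb.sum_repr ⟨f, hf⟩
          rw [Fin.sum_univ_one] at hsr
          exact ⟨gb.repr ⟨f, hf⟩ 0, by
            have := congrArg (fun z : ↥A => (z : Module.Dual F ↥C₀)) hsr
            simp only [SetLike.val_smul] at this
            exact this.symm⟩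
        obtain ⟨f₁, hf₁⟩ := exists_not_mem_of_ne_top A hAne
        set p₂ : Module.Dual F ↥C₀ := f₁ + g0 with hp₂def
        have hp₂A : p₂ ∉ A := by
          intro hcon
          apply hf₁
          have := A.sub_mem hcon hg0A
          simpa [hp₂def] using this
        have hf₁0 : f₁ ≠ 0 := fun hcon => hf₁ (hcon ▸ A.zero_mem)
        have hp₂0 : p₂ ≠ 0 := fun hcon => hp₂A (hcon ▸ A.zero_mem)
        have hf₁p₂ : f₁ ≠ p₂ := by
          intro hcon
          rw [hp₂def] at hcon
          exact hg0ne (left_eq_add.mp hcon)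
        have hspU : Submodule.span F ({f₁, g0} : Set (Module.Dual F ↥C₀)) ≠ ⊤ := by
          intro htop
          have hle : Module.finrank F ↥(Submodule.span F ({f₁, g0} : Set (Module.Dual F ↥C₀)))
              ≤ ({f₁, g0} : Set (Module.Dual F ↥C₀)).toFinset.card := finrank_span_le_card _
          have hcle : ({f₁, g0} : Set (Module.Dual F ↥C₀)).toFinset.card ≤ 2 := by
            rw [Set.toFinset_insert, Set.toFinset_singleton]
            exact (Finset.card_insert_le _ _).trans (by simp)
          rw [htop, finrank_top, hdim] at hle
          omega
        obtain ⟨ψ, hψ⟩ := exists_not_mem_of_ne_top _ hspU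
        have hf₁U : f₁ ∈ Submodule.span F ({f₁, g0} : Set (Module.Dual F ↥C₀)) :=
          Submodule.subset_span (Set.mem_insert _ _)
        have hg0U : g0 ∈ Submodule.span F ({f₁, g0} : Set (Module.Dual F ↥C₀)) :=
          Submodule.subset_span (Set.mem_insert_of_mem _ rfl)
        have hp₂U : p₂ ∈ Submodule.span F ({f₁, g0} : Set (Module.Dual F ↥C₀)) :=
          Submodule.add_mem _ hf₁U hg0U
        refine ⟨⇑(Equiv.swap f₁ p₂), (Equiv.swap f₁ p₂).bijective, ?_, ?_, ?_⟩
        · intro a f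
          rcases htwo a with ha | ha
          · subst ha
            rw [zero_smul, zero_smul]
            exact Equiv.swap_apply_of_ne_of_ne (Ne.symm hf₁0) (Ne.symm hp₂0)
          · subst ha
            rw [one_smul, one_smul]
        · intro f x hx
          by_cases hff : f = f₁
          · subst hff
            rw [Equiv.swap_apply_left, hp₂def, LinearMap.add_apply, hfix0 g0 hg0A x hx, add_zero]
          · by_cases hfp : f = p₂
            · subst hfp
              rw [Equiv.swap_apply_right, hp₂def, LinearMap.add_apply, hfix0 g0 hg0A x hx,
                add_zero]
            · rw [Equiv.swap_apply_of_ne_of_ne hff hfp]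
        · intro u v h
          have hfixv : ∀ φ, φ ≠ f₁ → φ ≠ p₂ → φ u = φ v := by
            intro φ h1 h2
            have hh := h φ
            rwa [Equiv.swap_apply_of_ne_of_ne h1 h2] at hh
          have hψf₁ : ψ ≠ f₁ := fun hcon => hψ (hcon ▸ hf₁U)
          have hψp₂ : ψ ≠ p₂ := fun hcon => hψ (hcon ▸ hp₂U)
          have hall : ∀ φ : Module.Dual F ↥C₀, φ u = φ v := by
            intro φ
            by_cases hφ : φ = f₁ ∨ φ = p₂
            · have hφU : φ ∈ Submodule.span F ({f₁, g0} : Set (Module.Dual F ↥C₀)) := by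
                rcases hφ with h1 | h1 <;> subst h1
                · exact hf₁U
                · exact hp₂U
              have hs1 : φ + ψ ≠ f₁ := by
                intro hcon
                apply hψ
                have : ψ = f₁ - φ := by rw [← hcon, add_sub_cancel_left]
                rw [this]
                exact Submodule.sub_mem _ hf₁U hφU
              have hs2 : φ + ψ ≠ p₂ := by
                intro hcon
                apply hψ
                have : ψ = p₂ - φ := by rw [← hcon, add_sub_cancel_left]
                rw [this]
                exact Submodule.sub_mem _ hp₂U hφU
              have e1 := hfixv (φ + ψ) hs1 hs2
              have e2 := hfixv ψ hψf₁ hψp₂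
              simp only [LinearMap.add_apply] at e1
              have e3 : φ u + ψ u = φ v + ψ u := by rw [e1, e2]
              exact add_right_cancel e3
            · push_neg at hφ
              exact hfixv φ hφ.1 hφ.2
          have huv : u = v := by
            rw [← sub_eq_zero]
            apply (Module.forall_dual_apply_eq_zero_iff F (u - v)).mp
            intro φ
            rw [map_sub, hall φ, sub_self]
          subst huv
          have hg0u : g0 u = 0 := by
            have hh := h f₁
            rw [Equiv.swap_apply_left, hp₂def, LinearMap.add_apply] at hh
            exact (left_eq_add.mp hh)
          apply hmemX
          intro f hf
          obtain ⟨c, rfl⟩ := hAspan f hf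
          rw [LinearMap.smul_apply, hg0u, smul_zero]
      · -- Case II : q = 2, dim A ≥ 2
        have hcard2 : Fintype.card F = 2 := by rw [hq]; exact hq2'
        have htwo := two_cases hcard2
        haveI : Module.Free F ↥A := Module.Free.of_divisionRing F ↥A
        obtain ⟨dA, hdA⟩ : ∃ d, Module.finrank F ↥A = d + 2 :=
          ⟨Module.finrank F ↥A - 2, by omega⟩
        obtain ⟨gb⟩ : Nonempty (Basis (Fin (dA + 2)) F ↥A) :=
          ⟨(Module.finBasis F ↥A).reindex (finCongr hdA)⟩
        have h01 : (0 : Fin (dA + 2)) ≠ 1 := by simp [Fin.ext_iff]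
        set gg : Fin (dA + 2) → Module.Dual F ↥C₀ :=
          fun i => ((gb i : ↥A) : Module.Dual F ↥C₀) with hggdef
        have ggInj : Function.Injective gg := fun i j hij => gb.injective (Subtype.ext hij)
        set bD : Module.Dual F ↥C₀ := gg 0 + gg 1 with hbDdef
        have hbDA : bD ∈ A := A.add_mem (gb 0).2 (gb 1).2
        have hggA : ∀ i, gg i ∈ A := fun i => (gb i).2
        have hbD_in_A : (⟨bD, hbDA⟩ : ↥A) = gb 0 + gb 1 := by
          apply Subtype.ext
          rfl
        have hgg_ne_b : ∀ i, gg i ≠ bD := by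
          intro i hcon
          have hgbcon : gb i = gb 0 + gb 1 := by
            rw [← hbD_in_A]
            exact Subtype.ext hcon
          by_cases hi0 : i = 0
          · subst hi0
            have e := congrArg (fun z => gb.repr z 1) hgbcon
            simp only [map_add, Basis.repr_self, Finsupp.add_apply,
              Finsupp.single_eq_same, Finsupp.single_eq_of_ne' h01, zero_add] at e
            exact zero_ne_one (α := F) e
          · have e := congrArg (fun z => gb.repr z 0) hgbcon
            simp only [map_add, Basis.repr_self, Finsupp.add_apply,
              Finsupp.single_eq_same, Finsupp.single_eq_of_ne' (Ne.symm h01),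
              Finsupp.single_eq_of_ne' hi0, add_zero] at e
            exact zero_ne_one (α := F) e
        set l : List (Module.Dual F ↥C₀) := (List.ofFn gg) ++ [bD] with hldef
        have hlen : l.length = dA + 3 := by simp [hldef]
        have hnodup : l.Nodup := by
          rw [hldef, List.nodup_append]
          refine ⟨List.nodup_ofFn.mpr ggInj, List.nodup_singleton _, ?_⟩
          intro x hx hx2
          rw [List.mem_ofFn] at hx
          obtain ⟨i, rfl⟩ := hx
          intro hmem
          rw [List.mem_singleton] at hmem
          rw [hmem]
          exact hgg_ne_b i
        have hlA : ∀ f ∈ l, f ∈ A := by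
          intro f hf
          rw [hldef, List.mem_append] at hf
          rcases hf with hf | hf
          · rw [List.mem_ofFn] at hf
            obtain ⟨i, rfl⟩ := hf
            exact hggA i
          · rw [List.mem_singleton] at hf
            rw [hf]
            exact hbDA
        have h0l : (0 : Module.Dual F ↥C₀) ∉ l := by
          intro hcon
          have h0A := hlA 0 hcon
          rw [hldef, List.mem_append] at hcon
          rcases hcon with hf | hf
          · rw [List.mem_ofFn] at hf
            obtain ⟨i, hi⟩ := hf
            exact Basis.ne_zero gb i (Subtype.ext (by rw [ZeroMemClass.coe_zero]; exact hi))
          · rw [List.mem_singleton] at hf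
            have hgbcon : (0 : ↥A) = gb 0 + gb 1 := by
              rw [← hbD_in_A]
              exact Subtype.ext hf
            have e := congrArg (fun z => gb.repr z 0) hgbcon
            simp only [map_add, map_zero, Basis.repr_self, Finsupp.add_apply,
              Finsupp.single_eq_same, Finsupp.single_eq_of_ne' (Ne.symm h01),
              Finsupp.zero_apply, add_zero] at e
            exact zero_ne_one (α := F) e
        have hgetl : ∀ (i : ℕ) (hi : i < dA + 2), l[i]'(by omega) = gg ⟨i, hi⟩ := by
          intro i hi
          simp only [hldef]
          rw [List.getElem_append_left (by simp [List.length_ofFn]; omega)]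
          rw [List.getElem_ofFn]
        have hgetlast : l[dA + 2]'(by omega) = bD := by
          simp only [hldef]
          rw [List.getElem_append_right (by simp [List.length_ofFn])]
          simp [List.length_ofFn]
        refine ⟨⇑l.formPerm, l.formPerm.bijective, ?_, ?_, ?_⟩
        · intro a f
          rcases htwo a with ha | ha
          · subst ha
            rw [zero_smul, zero_smul]
            exact List.formPerm_apply_of_notMem h0l
          · subst ha
            rw [one_smul, one_smul]
        · intro f x hx
          by_cases hf : f ∈ l
          · have h1 : l.formPerm f ∈ l := List.formPerm_apply_mem_of_mem hf
            rw [hfix0 _ (hlA _ h1) x hx, hfix0 _ (hlA _ hf) x hx]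
          · rw [List.formPerm_apply_of_notMem hf]
        · intro u v h
          have huv : u = v := by
            apply eq_of_agree_outside A hAne
            intro f hf
            have hfl : f ∉ l := fun hcon => hf (hlA f hcon)
            have hh := h f
            rwa [List.formPerm_apply_of_notMem hfl] at hh
          subst huv
          have hstep : ∀ (i : ℕ) (hi : i + 1 < dA + 2),
              gg ⟨i + 1, hi⟩ u = gg ⟨i, by omega⟩ u := by
            intro i hi
            have hh := h (gg ⟨i, by omega⟩)
            rw [← hgetl i (by omega)] at hh
            rw [List.formPerm_apply_getElem _ hnodup i (by omega)] at hh
            have hmod : (i + 1) % l.length = i + 1 := by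
              rw [hlen]; exact Nat.mod_eq_of_lt (by omega)
            rw [hgetl i (by omega)] at hh
            conv_rhs at hh => rw [show l[(i + 1) % l.length]'(by
                exact Nat.mod_lt _ (by omega)) = gg ⟨i + 1, hi⟩ from by
              simp only [hmod]
              exact hgetl (i + 1) hi]
            exact hh.symm
          have hall0 : ∀ (i : ℕ) (hi : i < dA + 2), gg ⟨i, hi⟩ u = gg ⟨0, by omega⟩ u := by
            intro i
            induction i with
            | zero => intro hi; rfl
            | succ i ih =>
              intro hi
              rw [hstep i hi]
              exact ih (by omega)
          have hblast : bD u = gg ⟨0, by omega⟩ u := by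
            have hh := h (gg ⟨dA + 1, by omega⟩)
            rw [← hgetl (dA + 1) (by omega),
              List.formPerm_apply_getElem _ hnodup (dA + 1) (by omega)] at hh
            have hmod : (dA + 1 + 1) % l.length = dA + 2 := by
              rw [hlen]; exact Nat.mod_eq_of_lt (by omega)
            conv_rhs at hh => rw [show l[(dA + 1 + 1) % l.length]'(by
                exact Nat.mod_lt _ (by omega)) = bD from by
              simp only [hmod]
              exact hgetlast]
            rw [hgetl (dA + 1) (by omega)] at hh
            rw [← hh]
            exact (hall0 (dA + 1) (by omega))
          have hgg0 : gg ⟨0, by omega⟩ u = 0 := by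
            have hb2 : bD u = gg ⟨0, by omega⟩ u + gg ⟨0, by omega⟩ u := by
              rw [hbDdef, LinearMap.add_apply]
              have e0 : gg 0 u = gg ⟨0, by omega⟩ u := rfl
              have e1 : gg 1 u = gg ⟨0, by omega⟩ u := by
                have := hall0 1 (by omega)
                rw [← this]
                congr 1
              rw [e0, e1]
            rw [hblast] at hb2
            exact (add_eq_right.mp hb2.symm)
          have hggz : ∀ i : Fin (dA + 2), gg i u = 0 := by
            intro i
            have := hall0 i.1 i.2
            rw [hgg0] at this
            rw [← this]
          apply hmemX
          intro f hf
          exact mem_ann_eval_zero A gb u hggz f hf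
    · -- Case I : q ≥ 3, m ≥ 1
      have hq3 : 3 ≤ q := by omega
      obtain ⟨μ, hμc⟩ := Finset.card_pos.mp (show 0 < (({0, 1} : Finset F)ᶜ).card by
        rw [Finset.card_compl]
        have h01 : ({0, 1} : Finset F).card ≤ 2 :=
          (Finset.card_insert_le _ _).trans (by simp)
        rw [hq]
        omega)
      rw [Finset.mem_compl, Finset.mem_insert, Finset.mem_singleton] at hμc
      push_neg at hμc
      obtain ⟨hμ0, hμ1⟩ := hμc
      have hmemiff : ∀ (c : F), c ≠ 0 → ∀ f, (c • f ∈ A ↔ f ∈ A) := by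
        intro c hc f
        constructor
        · intro h
          have := A.smul_mem c⁻¹ h
          rwa [smul_smul, inv_mul_cancel₀ hc, one_smul] at this
        · exact fun h => A.smul_mem c h
      refine ⟨fun f => if f ∈ A then μ • f else f, ?_, ?_, ?_, ?_⟩
      · refine Function.bijective_iff_has_inverse.mpr
          ⟨fun f => if f ∈ A then μ⁻¹ • f else f, ?_, ?_⟩
        · intro f
          by_cases hf : f ∈ A
          · simp only [if_pos hf, if_pos ((hmemiff μ hμ0 f).mpr hf), smul_smul,
              inv_mul_cancel₀ hμ0, one_smul]
          · simp only [if_neg hf]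
        · intro f
          by_cases hf : f ∈ A
          · simp only [if_pos hf, if_pos ((hmemiff μ⁻¹ (inv_ne_zero hμ0) f).mpr hf), smul_smul,
              mul_inv_cancel₀ hμ0, one_smul]
          · simp only [if_neg hf]
      · intro a f
        by_cases ha : a = 0
        · subst ha
          simp [A.zero_mem]
        · beta_reduce
          by_cases hf : f ∈ A
          · rw [if_pos (A.smul_mem a hf), if_pos hf, smul_comm]
          · rw [if_neg (fun hmem => hf ((hmemiff a ha f).mp hmem)), if_neg hf]
      · intro f x hx
        beta_reduce
        by_cases hf : f ∈ A
        · simp [if_pos hf, hfix0 f hf x hx]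
        · rw [if_neg hf]
      · intro u v h
        have h1 : ∀ f ∉ A, f u = f v := by
          intro f hf
          have hh := h f
          beta_reduce at hh
          rwa [if_neg hf] at hh
        have huv : u = v := eq_of_agree_outside A hAne u v h1
        subst huv
        apply hmemX
        intro f hf
        have hthis := h f
        beta_reduce at hthis
        rw [if_pos hf, LinearMap.smul_apply, smul_eq_mul] at hthis
        have h2 : (1 - μ) * f u = 0 := by
          rw [sub_mul, one_mul, ← hthis, sub_self]
        rcases mul_eq_zero.mp h2 with h3 | h3
        · exact absurd (sub_eq_zero.mp h3).symm hμ1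
        · exact h3
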